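/- There do not exist z₁, z₂ ∈ ℂ* and complex numbers a, b with |a| = |b| = 1, a ≠ b, such that conj(z₁)·conj(z₂)·u⁴ - (conj(z₁)+conj(z₂))·u³ + (z₁+z₂)·u - z₁·z₂ = conj(z₁)·conj(z₂)·(u-a)²·(u-b)² as polynomials in u. -/

import Mathlib

open Complex ComplexConjugate

theorem no_two_double_unimodular_zeros :
    ¬ ∃ (z₁ z₂ a b : ℂ), z₁ ≠ 0 ∧ z₂ ≠ 0 ∧
      ‖a‖ = 1 ∧ ‖b‖ = 1 ∧ a ≠ b ∧
      ∀ u : ℂ, conj z₁ * conj z₂ * u ^ 4 - (conj z₁ + conj z₂) * u ^ 3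
          + (z₁ + z₂) * u - z₁ * z₂
        = conj z₁ * conj z₂ * (u - a) ^ 2 * (u - b) ^ 2 := by
  rintro ⟨z₁, z₂, a, b, hz₁, hz₂, ha, hb, hab, h⟩
  have hc : conj z₁ * conj z₂ ≠ 0 := by
    simp [hz₁, hz₂]
  have hE0 : conj z₁ * conj z₂ * (a ^ 2 + 4 * a * b + b ^ 2) = 0 := by
    linear_combination (h 2 + h (-2) + 30 * h 0 - 16 * h 1 - 16 * h (-1)) / 24
  have hE : a ^ 2 + 4 * a * b + b ^ 2 = 0 := by
    rcases mul_eq_zero.mp hE0 with h' | h'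
    · exact absurd h' hc
    · exact h'
  have haa : a * conj a = 1 := by
    rw [Complex.mul_conj]
    norm_cast
    rw [Complex.normSq_eq_norm_sq, ha]; norm_num
  have hbb : b * conj b = 1 := by
    rw [Complex.mul_conj]
    norm_cast
    rw [Complex.normSq_eq_norm_sq, hb]; norm_num
  have ht : a * conj b + conj (a * conj b) = -4 := by
    rw [map_mul, Complex.conj_conj]
    linear_combination conj a * conj b * hE - (a * conj b + 4 * (b * conj b)) * haa
      - (conj a * b + 4) * hbb
  rw [Complex.add_conj] at ht
  have hre : (a * conj b).re = -2 := by
    have := congrArg Complex.re ht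
    simp [Complex.mul_re] at this ⊢
    linarith
  have habs : ‖a * conj b‖ = 1 := by
    rw [norm_mul, Complex.norm_conj, ha, hb]; norm_num
  have := Complex.abs_re_le_norm (a * conj b)
  rw [habs, hre] at this
  norm_num at this
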